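/- Let σ ∈ [3/2, 2]. There exists a constant C > 0, depending only on σ, such that for every integer m ≥ 10: Σ_{j=4}^{⌊m/2⌋} (m! / (j!(m−j)!)) · [(j−4)!]^σ · [(m−j−5)!]^σ ≤ C · [(m−6)!]^σ. -/

import Mathlib

-- Q lemma
lemma aux_Q6 (m : ℕ) (hm : 10 ≤ m) : m^6 ≤ 10^6 * (m - m/2 - 4)^5 * (m-8) := by
  set s := (m-8)/2 with hs
  have hs1 : 1 ≤ s := by omega
  have hQ : s ≤ m - m/2 - 4 := by omega
  have hm11 : m ≤ 11*s := by omega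
  have h2s : 2*s ≤ m-8 := by omega
  calc m^6 ≤ (11*s)^6 := Nat.pow_le_pow_left hm11 6
    _ = s^5 * (1771561 * s) := by ring
    _ ≤ s^5 * (10^6 * (m-8)) := by
        refine Nat.mul_le_mul_left _ ?_
        calc 1771561 * s ≤ 1000000 * (2*s) := by omega
          _ ≤ 10^6 * (m-8) := by
              refine Nat.mul_le_mul ?_ h2s
              norm_num
    _ ≤ (m - m/2 - 4)^5 * (10^6 * (m-8)) := by
        exact Nat.mul_le_mul_right _ (Nat.pow_le_pow_left hQ 5)
    _ = 10^6 * (m - m/2 - 4)^5 * (m-8) := by ring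

-- key nat inequality
lemma aux_key (m a b : ℕ) (hm : 10 ≤ m) (hb1 : m - m/2 - 4 ≤ b + 1) :
    m.factorial * ((a+1)*(a+2)) ≤
      10^6 * (m-8) * (m-6).factorial *
        (((a+1)*(a+2)*(a+3)*(a+4)) * ((b+1)*(b+2)*(b+3)*(b+4)*(b+5))) := by
  have h1 : m.factorial ≤ (m-6).factorial * m^6 := by
    have := Nat.factorial_mul_descFactorial (show 6 ≤ m by omega)
    calc m.factorial = (m-6).factorial * m.descFactorial 6 := this.symm
      _ ≤ (m-6).factorial * m^6 := Nat.mul_le_mul_left _ (Nat.descFactorial_le_pow m 6)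
  have hQ := aux_Q6 m hm
  have hDb : (m - m/2 - 4)^5 ≤ (b+1)*(b+2)*(b+3)*(b+4)*(b+5) := by
    calc (m - m/2 - 4)^5 ≤ (b+1)^5 := Nat.pow_le_pow_left hb1 5
      _ = (b+1)*(b+1)*(b+1)*(b+1)*(b+1) := by ring
      _ ≤ (b+1)*(b+2)*(b+3)*(b+4)*(b+5) := by gcongr <;> omega
  have hDa : (a+1)*(a+2) ≤ (a+1)*(a+2)*(a+3)*(a+4) := by
    calc (a+1)*(a+2) = (a+1)*(a+2)*1*1 := by ring
      _ ≤ (a+1)*(a+2)*(a+3)*(a+4) := by gcongr <;> omega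
  calc m.factorial * ((a+1)*(a+2))
      ≤ ((m-6).factorial * m^6) * ((a+1)*(a+2)) := Nat.mul_le_mul_right _ h1
    _ ≤ ((m-6).factorial * (10^6 * (m - m/2 - 4)^5 * (m-8))) * ((a+1)*(a+2)) :=
        Nat.mul_le_mul_right _ (Nat.mul_le_mul_left _ hQ)
    _ = (10^6 * (m-8) * (m-6).factorial) * (((a+1)*(a+2)) * (m - m/2 - 4)^5) := by ring
    _ ≤ (10^6 * (m-8) * (m-6).factorial) *
          (((a+1)*(a+2)*(a+3)*(a+4)) * ((b+1)*(b+2)*(b+3)*(b+4)*(b+5))) :=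
        Nat.mul_le_mul_left _ (Nat.mul_le_mul hDa hDb)


lemma aux_sum (n : ℕ) :
    (∑ j ∈ Finset.Icc 4 n, (1:ℝ)/(((j:ℝ)-3)*((j:ℝ)-2))) ≤ 1 := by
  have key : ∀ n : ℕ, 3 ≤ n →
      (∑ j ∈ Finset.Icc 4 n, (1:ℝ)/(((j:ℝ)-3)*((j:ℝ)-2))) ≤ 1 - 1/((n:ℝ)-2) := by
    intro n hn
    induction n, hn using Nat.le_induction with
    | base => norm_num
    | succ n hn ih =>
      rw [Finset.sum_Icc_succ_top (by omega : 4 ≤ n+1)]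
      have h1 : (1:ℝ) ≤ (n:ℝ) - 2 := by
        have : (3:ℝ) ≤ (n:ℝ) := by exact_mod_cast hn
        linarith
      have h2 : (0:ℝ) < (n:ℝ) - 2 := by linarith
      have h3 : (0:ℝ) < (n:ℝ) - 1 := by linarith
      push_cast
      have e1 : (1:ℝ)/(((n:ℝ)+1-3)*((n:ℝ)+1-2)) = 1/((n:ℝ)-2) - 1/((n:ℝ)-1) := by
        rw [div_sub_div _ _ h2.ne' h3.ne']
        have : ((n:ℝ)+1-3) = (n:ℝ)-2 := by ring
        rw [this]
        have : ((n:ℝ)+1-2) = (n:ℝ)-1 := by ring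
        rw [this]
        congr 1
        ring
      rw [e1]
      have e2 : (1:ℝ)/((n:ℝ)+1-2) = 1/((n:ℝ)-1) := by ring_nf
      rw [e2]
      linarith
  rcases lt_or_ge n 4 with h | h
  · rw [Finset.Icc_eq_empty (by omega)]
    norm_num
  · have := key n (by omega)
    have h2 : (0:ℝ) < (n:ℝ) - 2 := by
      have : (4:ℝ) ≤ (n:ℝ) := by exact_mod_cast h
      linarith
    have : 0 < 1/((n:ℝ)-2) := by positivity
    linarith


lemma aux_E (σ : ℝ) (hσl : 3/2 ≤ σ) (m : ℕ) (hm : 10 ≤ m) :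
    ((m-8:ℕ):ℝ) * (((m-9).factorial:ℝ))^(σ-1) ≤ (((m-6).factorial:ℝ))^(σ-1) := by
  have hfac : (m-6).factorial = (m-9).factorial * (m-6).descFactorial 3 := by
    have h := Nat.factorial_mul_descFactorial (show 3 ≤ m-6 by omega)
    rw [show m-6-3 = m-9 by omega] at h
    exact h.symm
  have hX : (m-8)^2 ≤ (m-6).descFactorial 3 := by
    have hd : (m-6).descFactorial 3 = (m-8)*((m-7)*(m-6)) := by
      simp [Nat.descFactorial]
      rw [show m-6-2 = m-8 by omega, show m-6-1 = m-7 by omega]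
    rw [hd, pow_two]
    exact Nat.mul_le_mul_left _ (by nlinarith [show 2 ≤ m-8 by omega, show m-8 ≤ m-7 by omega, show 1 ≤ m-6 by omega, show m-7 ≤ m-6 by omega])
  set X : ℝ := ((m-6).descFactorial 3 : ℝ) with hXdef
  have hX0 : (0:ℝ) ≤ ((m-8:ℕ):ℝ) := by positivity
  have hX1 : (1:ℝ) ≤ X := by
    have : 1 ≤ (m-6).descFactorial 3 := by
      calc 1 ≤ (m-8)^2 := by
            have : 2 ≤ m-8 := by omega
            nlinarith
        _ ≤ _ := hX
    rw [hXdef]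
    exact_mod_cast this
  have h1 : ((m-8:ℕ):ℝ) ≤ X^((1:ℝ)/2) := by
    have hx : ((m-8:ℕ):ℝ) = (((m-8:ℕ):ℝ)^(2:ℕ))^((1:ℝ)/2) := by
      rw [← Real.rpow_natCast ((m-8:ℕ):ℝ) 2, ← Real.rpow_mul hX0]
      norm_num
    rw [hx]
    apply Real.rpow_le_rpow (by positivity) _ (by norm_num)
    rw [hXdef]
    exact_mod_cast hX
  have h2 : X^((1:ℝ)/2) ≤ X^(σ-1) := Real.rpow_le_rpow_of_exponent_le hX1 (by linarith)
  calc ((m-8:ℕ):ℝ) * (((m-9).factorial:ℝ))^(σ-1)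
      ≤ X^(σ-1) * (((m-9).factorial:ℝ))^(σ-1) := by
        apply mul_le_mul_of_nonneg_right (h1.trans h2) (by positivity)
    _ = (((m-9).factorial:ℝ) * X)^(σ-1) := by
        rw [← Real.mul_rpow (by positivity) (by positivity), mul_comm]
    _ = (((m-6).factorial:ℝ))^(σ-1) := by
        congr 1
        rw [hfac]
        push_cast
        ring


lemma fac4 (a : ℕ) : (a+4).factorial = a.factorial * ((a+1)*(a+2)*(a+3)*(a+4)) := by
  calc (a+4).factorial = (a+4)*((a+3)*((a+2)*((a+1)*a.factorial))) := by
        rw [show a+4 = (a+3)+1 from rfl, Nat.factorial_succ,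
            show a+3 = (a+2)+1 from rfl, Nat.factorial_succ,
            show a+2 = (a+1)+1 from rfl, Nat.factorial_succ, Nat.factorial_succ]
    _ = _ := by ring

lemma fac5 (b : ℕ) : (b+5).factorial = b.factorial * ((b+1)*(b+2)*(b+3)*(b+4)*(b+5)) := by
  rw [show b+5 = (b+1)+4 from by ring, fac4, Nat.factorial_succ]
  ring

lemma aux_term (σ : ℝ) (hσl : 3/2 ≤ σ) (m j : ℕ) (hm : 10 ≤ m)
    (hj4 : 4 ≤ j) (hj2 : j ≤ m/2) :
    (m.factorial : ℝ) / ((j.factorial : ℝ) * ((m - j).factorial : ℝ))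
      * ((j - 4).factorial : ℝ) ^ σ * ((m - j - 5).factorial : ℝ) ^ σ
    ≤ (10^6 / (((j:ℝ)-3)*((j:ℝ)-2))) * ((m - 6).factorial : ℝ) ^ σ := by
  obtain ⟨a, rfl⟩ : ∃ a, j = a + 4 := ⟨j - 4, by omega⟩
  set b := m - (a+4) - 5 with hbdef
  have hmj : m - (a+4) = b + 5 := by omega
  have hab : a + b = m - 9 := by omega
  have hbQ : m - m/2 - 4 ≤ b + 1 := by omega
  rw [hmj, show a+4-4 = a by omega, fac4, fac5]
  have hσ1 : (0:ℝ) ≤ σ - 1 := by linarith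
  set A : ℝ := (a.factorial : ℝ) with hA
  set B : ℝ := (b.factorial : ℝ) with hB
  have hApos : 0 < A := by positivity
  have hBpos : 0 < B := by positivity
  set Da : ℝ := (((a+1)*(a+2)*(a+3)*(a+4) : ℕ) : ℝ) with hDa
  set Db : ℝ := (((b+1)*(b+2)*(b+3)*(b+4)*(b+5) : ℕ) : ℝ) with hDb
  have hDapos : 0 < Da := by rw [hDa]; positivity
  have hDbpos : 0 < Db := by rw [hDb]; positivity
  have hcast1 : ((a.factorial * ((a+1)*(a+2)*(a+3)*(a+4)) : ℕ) : ℝ) = A * Da := by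
    push_cast [hA, hDa]; ring
  have hcast2 : ((b.factorial * ((b+1)*(b+2)*(b+3)*(b+4)*(b+5)) : ℕ) : ℝ) = B * Db := by
    push_cast [hB, hDb]; ring
  rw [hcast1, hcast2]
  -- rewrite rpow
  have hrA : A ^ σ = A * A ^ (σ-1) := by
    rw [show σ = 1 + (σ-1) by ring, Real.rpow_add hApos, Real.rpow_one]
    ring_nf
  have hrB : B ^ σ = B * B ^ (σ-1) := by
    rw [show σ = 1 + (σ-1) by ring, Real.rpow_add hBpos, Real.rpow_one]
    ring_nf
  have hsplit : (m.factorial : ℝ) / ((A * Da) * (B * Db)) * A ^ σ * B ^ σ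
      = ((m.factorial : ℝ) / (Da * Db)) * (A ^ (σ-1) * B ^ (σ-1)) := by
    rw [hrA, hrB]
    field_simp
  rw [hsplit]
  -- bound the rpow part
  have hAB : A ^ (σ-1) * B ^ (σ-1) ≤ (((m-9).factorial : ℝ)) ^ (σ-1) := by
    rw [← Real.mul_rpow hApos.le hBpos.le]
    apply Real.rpow_le_rpow (by positivity) _ hσ1
    have : a.factorial * b.factorial ≤ (m-9).factorial := by
      apply Nat.le_of_dvd (Nat.factorial_pos _)
      rw [← hab]
      exact Nat.factorial_mul_factorial_dvd_factorial_add a b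
    rw [hA, hB]
    exact_mod_cast this
  -- bound the ratio part
  set P : ℝ := (((a+1)*(a+2) : ℕ) : ℝ) with hP
  have hPpos : 0 < P := by rw [hP]; positivity
  have hratio : (m.factorial : ℝ) / (Da * Db)
      ≤ (10^6 * ((m-8:ℕ):ℝ) * ((m-6).factorial : ℝ)) / P := by
    rw [div_le_div_iff₀ (by positivity) hPpos]
    have := aux_key m a b hm hbQ
    calc (m.factorial : ℝ) * P
        = ((m.factorial * ((a+1)*(a+2)) : ℕ) : ℝ) := by push_cast [hP]; ring
      _ ≤ ((10^6 * (m-8) * (m-6).factorial *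
            (((a+1)*(a+2)*(a+3)*(a+4)) * ((b+1)*(b+2)*(b+3)*(b+4)*(b+5))) : ℕ) : ℝ) := by
          exact_mod_cast this
      _ = 10^6 * ((m-8:ℕ):ℝ) * ((m-6).factorial : ℝ) * (Da * Db) := by
          push_cast [hDa, hDb]; ring
  -- combine
  have hPj : ((((a+4:ℕ)):ℝ) - 3) * ((((a+4:ℕ)):ℝ) - 2) = P := by
    rw [hP]; push_cast; ring
  rw [hPj]
  calc ((m.factorial : ℝ) / (Da * Db)) * (A ^ (σ-1) * B ^ (σ-1))
      ≤ ((10^6 * ((m-8:ℕ):ℝ) * ((m-6).factorial : ℝ)) / P) * (((m-9).factorial : ℝ)) ^ (σ-1) := by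
        apply mul_le_mul hratio hAB (by positivity) (by positivity)
    _ = (10^6 * ((m-6).factorial : ℝ) / P) * (((m-8:ℕ):ℝ) * (((m-9).factorial : ℝ)) ^ (σ-1)) := by
        ring
    _ ≤ (10^6 * ((m-6).factorial : ℝ) / P) * (((m-6).factorial : ℝ)) ^ (σ-1) := by
        apply mul_le_mul_of_nonneg_left (aux_E σ hσl m hm) (by positivity)
    _ = (10^6 / P) * (((m-6).factorial : ℝ) * ((m-6).factorial : ℝ) ^ (σ-1)) := by ring
    _ = (10^6 / P) * ((m-6).factorial : ℝ) ^ σ := by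
        rw [show ((m-6).factorial : ℝ) * ((m-6).factorial : ℝ) ^ (σ-1)
              = ((m-6).factorial : ℝ) ^ σ from by
            rw [show σ = 1 + (σ-1) by ring, Real.rpow_add (by positivity), Real.rpow_one]
            ring_nf]


/-- factorial convolution inequality from the proof of Lemma 3.3:
for σ ∈ [3/2,2] there is C > 0 depending only on σ such that for every m ≥ 10,
Σ_{j=4}^{⌊m/2⌋} (m!/(j!(m−j)!)) [(j−4)!]^σ [(m−j−5)!]^σ ≤ C [(m−6)!]^σ. -/
theorem factorial_convolution_inequality (σ : ℝ) (hσl : 3 / 2 ≤ σ) (hσu : σ ≤ 2) :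
    ∃ C : ℝ, 0 < C ∧
      ∀ m : ℕ, 10 ≤ m →
        (∑ j ∈ Finset.Icc 4 (m / 2),
            ((m.factorial : ℝ) / ((j.factorial : ℝ) * ((m - j).factorial : ℝ)))
              * ((j - 4).factorial : ℝ) ^ σ * ((m - j - 5).factorial : ℝ) ^ σ)
          ≤ C * ((m - 6).factorial : ℝ) ^ σ := by
  refine ⟨10^6, by norm_num, ?_⟩
  intro m hm
  set K : ℝ := ((m - 6).factorial : ℝ) ^ σ with hK
  have hK0 : 0 ≤ K := by rw [hK]; positivity
  calc (∑ j ∈ Finset.Icc 4 (m / 2),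
            ((m.factorial : ℝ) / ((j.factorial : ℝ) * ((m - j).factorial : ℝ)))
              * ((j - 4).factorial : ℝ) ^ σ * ((m - j - 5).factorial : ℝ) ^ σ)
      ≤ ∑ j ∈ Finset.Icc 4 (m / 2), (10^6 / (((j:ℝ)-3)*((j:ℝ)-2))) * K := by
        apply Finset.sum_le_sum
        intro j hj
        rw [Finset.mem_Icc] at hj
        exact aux_term σ hσl m j hm hj.1 hj.2
    _ = (10^6 * K) * ∑ j ∈ Finset.Icc 4 (m / 2), (1:ℝ)/(((j:ℝ)-3)*((j:ℝ)-2)) := by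
        rw [Finset.mul_sum]
        apply Finset.sum_congr rfl
        intro j _
        ring
    _ ≤ (10^6 * K) * 1 := by
        apply mul_le_mul_of_nonneg_left (aux_sum (m/2)) (by positivity)
    _ = 10^6 * K := by ring
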